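/- Let a > 0, ψ(x) = (1/(2πa))·exp(−x²/(4πa²)), C(m) = ∫_m^∞ (x − m)·ψ(x) dx and P(m) = C(−m). Define a(m) = C(m)·P(m) and b(m) = C(m)·P(m)·(C(m)+P(m))/2. Then a(0) = a², b(0) = a³, and as m → 0: a(m)/a(0) = 1 − ((π−2)/(4π))·(m/a)² + O(m⁴) and b(m)/b(0) = 1 − ((π−3)/(4π))·(m/a)² + O(m⁴). -/

import Mathlib

open MeasureTheory

/-- Bachelier's Gaussian density `ψ(x) = (1/(2πa))·exp(−x²/(4πa²))`. -/
noncomputable def bachelierPsi (a x : ℝ) : ℝ :=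
  (2 * Real.pi * a)⁻¹ * Real.exp (-x ^ 2 / (4 * Real.pi * a ^ 2))

/-- Bachelier call price as a function of `m = K − S₀`. -/
noncomputable def bachelierCall (a m : ℝ) : ℝ :=
  ∫ x in Set.Ioi m, (x - m) * bachelierPsi a x

/-- Bachelier put price, `P(m) = C(−m)`. -/
noncomputable def bachelierPut (a m : ℝ) : ℝ := bachelierCall a (-m)

open Real Set Filter Topology

set_option maxHeartbeats 1000000

lemma psi_eq (a x : ℝ) :
    bachelierPsi a x = (2*π*a)⁻¹ * Real.exp (-((4*π*a^2)⁻¹) * x^2) := by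
  unfold bachelierPsi
  congr 1
  rw [neg_div, div_eq_mul_inv, neg_mul, mul_comm]

lemma integ_psi (a : ℝ) (ha : 0 < a) : Integrable (bachelierPsi a) := by
  have hb : (0:ℝ) < (4*π*a^2)⁻¹ := by positivity
  have : bachelierPsi a = fun x => (2*π*a)⁻¹ * Real.exp (-((4*π*a^2)⁻¹) * x^2) := by
    funext x; exact psi_eq a x
  rw [this]
  exact (integrable_exp_neg_mul_sq hb).const_mul _

lemma integ_xpsi (a : ℝ) (ha : 0 < a) : Integrable (fun x => x * bachelierPsi a x) := by
  have hb : (0:ℝ) < (4*π*a^2)⁻¹ := by positivity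
  have : (fun x => x * bachelierPsi a x)
      = fun x => (2*π*a)⁻¹ * (x * Real.exp (-((4*π*a^2)⁻¹) * x^2)) := by
    funext x; rw [psi_eq]; ring
  rw [this]
  exact (integrable_mul_exp_neg_mul_sq hb).const_mul _

lemma total_psi (a : ℝ) (ha : 0 < a) : ∫ x, bachelierPsi a x = 1 := by
  have hb : (0:ℝ) < (4*π*a^2)⁻¹ := by positivity
  simp_rw [psi_eq a]
  rw [MeasureTheory.integral_const_mul, integral_gaussian]
  have h1 : π / (4*π*a^2)⁻¹ = (2*π*a)^2 := by
    field_simp; ring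
  rw [h1, Real.sqrt_sq (by positivity)]
  field_simp

lemma psi_even (a x : ℝ) : bachelierPsi a (-x) = bachelierPsi a x := by
  unfold bachelierPsi; rw [neg_pow]; norm_num

lemma half_psi (a : ℝ) (ha : 0 < a) : ∫ x in Iic (0:ℝ), bachelierPsi a x = 1/2 := by
  have h1 : ∫ x in Iic (0:ℝ), bachelierPsi a (-x) = ∫ x in Ioi (-(0:ℝ)), bachelierPsi a x :=
    integral_comp_neg_Iic 0 (bachelierPsi a)
  simp_rw [psi_even, neg_zero] at h1
  have h2 := intervalIntegral.integral_Iic_add_Ioi ((integ_psi a ha).integrableOn)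
    ((integ_psi a ha).integrableOn) (b := (0:ℝ))
  rw [total_psi a ha, ← h1] at h2
  linarith

lemma Ioi_psi (a : ℝ) (ha : 0 < a) (m : ℝ) :
    ∫ x in Ioi m, bachelierPsi a x = 1/2 - ∫ x in (0:ℝ)..m, bachelierPsi a x := by
  have h2 := intervalIntegral.integral_Iic_add_Ioi ((integ_psi a ha).integrableOn)
    ((integ_psi a ha).integrableOn) (b := m)
  rw [total_psi a ha] at h2
  have h3 := intervalIntegral.integral_Iic_sub_Iic ((integ_psi a ha).integrableOn)
    ((integ_psi a ha).integrableOn) (a := (0:ℝ)) (b := m)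
  rw [half_psi a ha] at h3
  linarith

lemma Ioi_xpsi (a : ℝ) (ha : 0 < a) (m : ℝ) :
    ∫ x in Ioi m, x * bachelierPsi a x = a * Real.exp (-((4*π*a^2)⁻¹) * m^2) := by
  set b : ℝ := (4*π*a^2)⁻¹ with hbdef
  have hb : (0:ℝ) < b := by positivity
  have hd : ∀ x : ℝ, HasDerivAt (fun y => -a * Real.exp (-b*y^2)) (x * bachelierPsi a x) x := by
    intro x
    have h1 : HasDerivAt (fun y : ℝ => -b*y^2) (-b*(2*x)) x := by
      simpa using (hasDerivAt_pow 2 x).const_mul (-b)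
    have h2 := (h1.exp).const_mul (-a)
    refine h2.congr_deriv ?_
    rw [psi_eq]
    rw [hbdef]
    field_simp
    ring
  have htend : Tendsto (fun y : ℝ => -a * Real.exp (-b*y^2)) atTop (𝓝 0) := by
    have h1 : Tendsto (fun y : ℝ => b * y^2) atTop atTop :=
      (tendsto_pow_atTop (two_ne_zero)).const_mul_atTop hb
    have h2 : Tendsto (fun y : ℝ => Real.exp (-(b*y^2))) atTop (𝓝 0) :=
      Real.tendsto_exp_neg_atTop_nhds_zero.comp h1
    have h3 := h2.const_mul (-a)
    simpa [neg_mul] using h3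
  have := MeasureTheory.integral_Ioi_of_hasDerivAt_of_tendsto'
    (fun x _ => hd x) ((integ_xpsi a ha).integrableOn) htend (a := m)
  rw [this]; ring

lemma call_formula (a : ℝ) (ha : 0 < a) (m : ℝ) :
    bachelierCall a m = a * Real.exp (-((4*π*a^2)⁻¹) * m^2)
      - m * (1/2 - ∫ x in (0:ℝ)..m, bachelierPsi a x) := by
  unfold bachelierCall
  have h1 : ∀ x : ℝ, (x - m) * bachelierPsi a x = x * bachelierPsi a x - m * bachelierPsi a x := by
    intro x; ring
  simp_rw [h1]
  rw [MeasureTheory.integral_sub ((integ_xpsi a ha).integrableOn)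
    (((integ_psi a ha).const_mul m).integrableOn),
    MeasureTheory.integral_const_mul, Ioi_psi a ha, Ioi_xpsi a ha]

lemma psi_cont (a : ℝ) : Continuous (bachelierPsi a) := by
  unfold bachelierPsi; fun_prop

lemma E_bound (a : ℝ) (ha : 0 < a) (m : ℝ) :
    |(∫ x in (0:ℝ)..m, bachelierPsi a x) - (2*π*a)⁻¹ * m|
      ≤ (2*π*a)⁻¹ * (4*π*a^2)⁻¹ * m^2 * |m| := by
  set c : ℝ := (2*π*a)⁻¹ with hc
  set b : ℝ := (4*π*a^2)⁻¹ with hb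
  have hcpos : (0:ℝ) < c := by rw [hc]; positivity
  have hbpos : (0:ℝ) < b := by rw [hb]; positivity
  have hsub : (∫ x in (0:ℝ)..m, bachelierPsi a x) - c * m
      = ∫ x in (0:ℝ)..m, (bachelierPsi a x - c) := by
    rw [intervalIntegral.integral_sub ((psi_cont a).intervalIntegrable 0 m)
      (intervalIntegrable_const), intervalIntegral.integral_const]
    simp [mul_comm]
  rw [hsub]
  have hbound : ∀ x ∈ Set.uIoc (0:ℝ) m, ‖bachelierPsi a x - c‖ ≤ c * b * m^2 := by
    intro x hx
    have hx2 : x^2 ≤ m^2 := by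
      rcases Set.mem_uIoc.mp hx with ⟨h1, h2⟩ | ⟨h1, h2⟩ <;> nlinarith
    have hform : bachelierPsi a x - c = c * (Real.exp (-(b*x^2)) -1) := by
      rw [psi_eq, ← hc, ← hb, neg_mul]; ring
    have hexple : Real.exp (-(b * x^2)) ≤ 1 :=
      Real.exp_le_one_iff.mpr (by nlinarith)
    have hexpge : 1 - b*x^2 ≤ Real.exp (-(b*x^2)) := by
      have := Real.add_one_le_exp (-(b*x^2)); linarith
    rw [hform, Real.norm_eq_abs, abs_mul, abs_of_pos hcpos,
      abs_of_nonpos (by linarith)]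
    nlinarith [mul_le_mul_of_nonneg_left hx2 (mul_pos hcpos hbpos).le, mul_le_mul_of_nonneg_left hexpge hcpos.le]
  have := intervalIntegral.norm_integral_le_of_norm_le_const hbound
  rw [Real.norm_eq_abs] at this
  simpa using this

lemma core_bound (u g e₁ e₂ : ℝ) (hu : |u| ≤ 1)
    (hg : |g - (1 - u^2/(4*π))| ≤ u^4/100)
    (h1 : |e₁ - u/(2*π)| ≤ |u|^3/50)
    (h2 : |e₂ + u/(2*π)| ≤ |u|^3/50) :
    |(g - u*(1/2 - e₁)) * (g + u*(1/2 - e₂)) - (1 - (π-2)/(4*π)*u^2)| ≤ 3*u^4 ∧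
    |(g - u*(1/2 - e₁)) * (g + u*(1/2 - e₂))
        * ((g - u*(1/2 - e₁) + (g + u*(1/2 - e₂)))/2) - (1 - (π-3)/(4*π)*u^2)| ≤ 11*u^4 := by
  have hπ : (3:ℝ) < π := pi_gt_three
  have hπ0 : (0:ℝ) < π := by linarith
  have hπu : π < 3.15 := pi_lt_d2
  have hu1 : -1 ≤ u ∧ u ≤ 1 := abs_le.mp hu
  have hu2 : u^2 ≤ 1 := by nlinarith [hu1.1, hu1.2]
  have hu4 : u^4 ≤ 1 := by nlinarith [sq_nonneg u]
  have hu4nn : 0 ≤ u^4 := by positivity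
  have habs4 : |u| * |u|^3 = u^4 := by
    rw [← pow_succ']
    rw [← abs_pow]
    exact abs_of_nonneg hu4nn
  have hu8 : u^4 * u^4 ≤ u^4 := by nlinarith
  set εg := g - (1 - u^2/(4*π)) with hεg
  set ε₁ := e₁ - u/(2*π) with hε₁
  set ε₂ := e₂ + u/(2*π) with hε₂
  set C0 : ℝ := 1 + u^2/(4*π) - u/2 with hC0
  set P0 : ℝ := 1 + u^2/(4*π) + u/2 with hP0
  set S0 : ℝ := 1 + u^2/(4*π) with hS0
  set α : ℝ := εg + u*ε₁ with hα
  set β : ℝ := εg - u*ε₂ with hβ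
  set γ : ℝ := εg + u*(ε₁ - ε₂)/2 with hγ
  clear_value εg ε₁ ε₂ C0 P0 S0 α β γ
  -- decomposition identities
  have hC : g - u*(1/2 - e₁) = C0 + α := by
    rw [hα, hC0, hS0, hεg, hε₁]; ring
  have hP : g + u*(1/2 - e₂) = P0 + β := by
    rw [hβ, hP0, hS0, hεg, hε₂]; ring
  -- error bounds
  have hαb : |α| ≤ u^4/4 := by
    calc |α| ≤ |εg| + |u| * |ε₁| := by
          rw [hα]; exact (abs_add_le _ _).trans (by rw [abs_mul])
      _ ≤ u^4/100 + |u| * (|u|^3/50) := by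
          have := mul_le_mul_of_nonneg_left h1 (abs_nonneg u)
          linarith
      _ ≤ u^4/4 := by rw [mul_div_assoc'] at *; rw [habs4] at *; linarith
  have hβb : |β| ≤ u^4/4 := by
    calc |β| ≤ |εg| + |u| * |ε₂| := by
          rw [hβ]; exact (abs_sub _ _).trans (by rw [abs_mul])
      _ ≤ u^4/100 + |u| * (|u|^3/50) := by
          have := mul_le_mul_of_nonneg_left h2 (abs_nonneg u)
          linarith
      _ ≤ u^4/4 := by rw [mul_div_assoc'] at *; rw [habs4] at *; linarith
  have hγb : |γ| ≤ u^4/4 := by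
    calc |γ| ≤ |εg| + |u| * (|ε₁| + |ε₂|) / 2 := by
          rw [hγ]
          refine (abs_add_le _ _).trans ?_
          have : |u * (ε₁ - ε₂) / 2| ≤ |u| * (|ε₁| + |ε₂|) / 2 := by
            rw [abs_div, abs_mul]
            have := abs_sub ε₁ ε₂
            have h0 : (|2| : ℝ) = 2 := by norm_num
            rw [h0]
            gcongr
          linarith
      _ ≤ u^4/100 + |u| * (|u|^3/50 + |u|^3/50) / 2 := by
          have := mul_le_mul_of_nonneg_left (add_le_add h1 h2) (abs_nonneg u)
          linarith
      _ ≤ u^4/4 := by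
          have : |u| * (|u|^3/50 + |u|^3/50) / 2 = u^4/50 := by
            field_simp
            linear_combination 2 * habs4
          rw [this]; linarith
  -- magnitude bounds
  have hq1 : 0 ≤ u^2/(4*π) := by positivity
  have hq2 : u^2/(4*π) ≤ 1/12 := by
    rw [div_le_iff₀ (by positivity : (0:ℝ) < 4*π)]; linarith
  have hS0b : |S0| ≤ 2 := by
    rw [hS0, abs_le]; constructor <;> nlinarith
  have hC0b : |C0| ≤ 2 := by
    rw [hC0, abs_le]; rw [hS0]
    constructor <;> nlinarith [hu1.1, hu1.2]
  have hP0b : |P0| ≤ 2 := by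
    rw [hP0, abs_le]; rw [hS0]
    constructor <;> nlinarith [hu1.1, hu1.2]
  have hCP0 : C0 * P0 = (1 - (π-2)/(4*π)*u^2) + u^4/(16*π^2) := by
    rw [hC0, hP0, hS0]
    field_simp
    ring
  have key : (C0+α)*(P0+β) - (1 - (π-2)/(4*π)*u^2)
      = α*P0 + C0*β + α*β + u^4/(16*π^2) := by
    linear_combination hCP0
  have h9 : (9:ℝ) ≤ π^2 := by nlinarith
  have ht4 : u^4/(16*π^2) ≤ u^4/144 := by
    rw [div_le_div_iff₀ (by positivity : (0:ℝ) < 16*π^2) (by norm_num : (0:ℝ) < 144)]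
    nlinarith [mul_le_mul_of_nonneg_left h9 hu4nn]
  have goal1 : |(C0+α)*(P0+β) - (1 - (π-2)/(4*π)*u^2)| ≤ 3*u^4 := by
    rw [key]
    have m1 : |α*P0| ≤ u^4/4*2 := by
      rw [abs_mul]; exact mul_le_mul hαb hP0b (abs_nonneg _) (by positivity)
    have m2 : |C0*β| ≤ 2*(u^4/4) := by
      rw [abs_mul]; exact mul_le_mul hC0b hβb (abs_nonneg _) (by norm_num)
    have m3 : |α*β| ≤ u^4/4*(u^4/4) := by
      rw [abs_mul]; exact mul_le_mul hαb hβb (abs_nonneg _) (by positivity)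
    have m4 : |u^4/(16*π^2)| = u^4/(16*π^2) := abs_of_nonneg (by positivity)
    have A3 := abs_add_le (α*P0) (C0*β)
    have A2 := abs_add_le (α*P0 + C0*β) (α*β)
    have A1 := abs_add_le (α*P0 + C0*β + α*β) (u^4/(16*π^2))
    linarith [hu8]
  have hSid : (g - u*(1/2 - e₁) + (g + u*(1/2 - e₂)))/2 = S0 + γ := by
    rw [hγ, hS0, hεg, hε₁, hε₂]; ring
  have hQ0b : |1 - (π-2)/(4*π)*u^2| ≤ 2 := by
    have h01 : 0 ≤ (π-2)/(4*π) := by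
      apply div_nonneg (by linarith) (by positivity)
    have h02 : (π-2)/(4*π) ≤ 1/4 := by
      rw [div_le_iff₀ (by positivity : (0:ℝ) < 4*π)]; linarith
    have hb1 : 0 ≤ (π-2)/(4*π)*u^2 := mul_nonneg h01 (sq_nonneg u)
    have hb2 : (π-2)/(4*π)*u^2 ≤ 1/4 := by
      have := mul_le_mul_of_nonneg_right h02 (sq_nonneg u)
      linarith
    rw [abs_le]
    constructor <;> linarith
  have hSb : |S0 + γ| ≤ 3 := by
    refine (abs_add_le _ _).trans ?_
    have : |γ| ≤ 1/4 := hγb.trans (by linarith)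
    linarith
  have hQS0 : (1 - (π-2)/(4*π)*u^2) * S0
      = (1 - (π-3)/(4*π)*u^2) - (π-2)/(16*π^2)*u^4 := by
    rw [hS0]; field_simp; ring
  have hκ : |(π-2)/(16*π^2)*u^4| ≤ u^4 := by
    have hnum : 0 ≤ (π-2)/(16*π^2) := div_nonneg (by linarith) (by positivity)
    rw [abs_of_nonneg (mul_nonneg hnum hu4nn)]
    have h1' : (π-2)/(16*π^2) ≤ 1 := by
      rw [div_le_one (by positivity : (0:ℝ) < 16*π^2)]
      linarith [h9]
    have := mul_le_mul_of_nonneg_right h1' hu4nn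
    linarith
  have key2 : (C0+α)*(P0+β)*(S0+γ) - (1 - (π-3)/(4*π)*u^2)
      = ((C0+α)*(P0+β) - (1 - (π-2)/(4*π)*u^2))*(S0+γ)
        + (1 - (π-2)/(4*π)*u^2)*γ - (π-2)/(16*π^2)*u^4 := by
    linear_combination hQS0
  have goal2 : |(C0+α)*(P0+β)*(S0+γ) - (1 - (π-3)/(4*π)*u^2)| ≤ 11*u^4 := by
    rw [key2]
    have m1 : |((C0+α)*(P0+β) - (1 - (π-2)/(4*π)*u^2))*(S0+γ)| ≤ 3*u^4*3 := by
      rw [abs_mul]; exact mul_le_mul goal1 hSb (abs_nonneg _) (by positivity)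
    have m2 : |(1 - (π-2)/(4*π)*u^2)*γ| ≤ 2*(u^4/4) := by
      rw [abs_mul]; exact mul_le_mul hQ0b hγb (abs_nonneg _) (by norm_num)
    have A2 := abs_add_le (((C0+α)*(P0+β) - (1 - (π-2)/(4*π)*u^2))*(S0+γ))
      ((1 - (π-2)/(4*π)*u^2)*γ)
    have A1 := abs_sub (((C0+α)*(P0+β) - (1 - (π-2)/(4*π)*u^2))*(S0+γ)
      + (1 - (π-2)/(4*π)*u^2)*γ) ((π-2)/(16*π^2)*u^4)
    linarith
  constructor
  · rw [hC, hP]; exact goal1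
  · rw [hC, hP]
    have h' : (C0 + α + (P0 + β))/2 = S0 + γ := by rw [← hC, ← hP]; exact hSid
    rw [h']; exact goal2



lemma E_bound' (a : ℝ) (ha : 0 < a) (m : ℝ) :
    |(∫ x in (0:ℝ)..m, bachelierPsi a x) - (m/a)/(2*π)| ≤ |m/a|^3/50 := by
  have hπ : (3:ℝ) < π := pi_gt_three
  have hπ0 : (0:ℝ) < π := by linarith
  have h9 : (9:ℝ) ≤ π^2 := by nlinarith
  have h := E_bound a ha m
  have e1 : (2*π*a)⁻¹ * m = (m/a)/(2*π) := by
    rw [inv_mul_eq_div, div_div, show a*(2*π) = 2*π*a from by ring]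
  have e2 : (2*π*a)⁻¹*(4*π*a^2)⁻¹*m^2*|m| = (8*π^2)⁻¹ * |m/a|^3 := by
    rw [abs_div, abs_of_pos ha, div_pow]
    field_simp
    linear_combination (-(8*|m|)) * sq_abs m
  rw [e1, e2] at h
  refine h.trans ?_
  have hcoef : (8*π^2)⁻¹ ≤ (50:ℝ)⁻¹ := by
    apply inv_anti₀ (by norm_num)
    linarith
  have hnn : (0:ℝ) ≤ |m/a|^3 := by positivity
  calc (8*π^2)⁻¹ * |m/a|^3 ≤ (50:ℝ)⁻¹ * |m/a|^3 :=
        mul_le_mul_of_nonneg_right hcoef hnn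
    _ = |m/a|^3/50 := by ring

lemma exp_approx (a : ℝ) (ha : 0 < a) (m : ℝ) (hm : |m| ≤ a) :
    |Real.exp (-((4*π*a^2)⁻¹) * m^2) - (1 - (m/a)^2/(4*π))| ≤ (m/a)^4/100 := by
  have hπ : (3:ℝ) < π := pi_gt_three
  have hπ0 : (0:ℝ) < π := by linarith
  have h9 : (9:ℝ) ≤ π^2 := by nlinarith
  have ha4 : (0:ℝ) < a^4 := by positivity
  have hm2 : m^2 ≤ a^2 := by
    have h' := abs_le.mp hm
    nlinarith [h'.1, h'.2]
  have hx1 : |(-((4*π*a^2)⁻¹) * m^2)| ≤ 1 := by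
    rw [abs_mul, abs_neg, abs_of_pos (by positivity : (0:ℝ) < (4*π*a^2)⁻¹),
      abs_of_nonneg (sq_nonneg m)]
    rw [inv_mul_le_iff₀ (by positivity : (0:ℝ) < 4*π*a^2)]
    nlinarith [sq_nonneg a]
  have hb := Real.exp_bound hx1 (n := 2) (by norm_num)
  rw [Finset.sum_range_succ, Finset.sum_range_succ, Finset.sum_range_zero] at hb
  norm_num at hb
  have hid : 1 - (m/a)^2/(4*π) = 1 + (-((4*π*a^2)⁻¹) * m^2) := by
    field_simp
    ring
  have hid2 : |(-((4*π*a^2)⁻¹) * m^2)|^2 = (16*π^2*a^4)⁻¹ * m^4 := by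
    rw [abs_mul, abs_neg, abs_of_pos (by positivity : (0:ℝ) < (4*π*a^2)⁻¹),
      abs_of_nonneg (sq_nonneg m), mul_pow, inv_pow,
      show ((4*π*a^2)^2) = 16*π^2*a^4 from by ring]
    ring
  have hb' : |Real.exp (-((4*π*a^2)⁻¹) * m^2) - (1 + (-((4*π*a^2)⁻¹) * m^2))|
      ≤ (16*π^2*a^4)⁻¹ * m^4 * (3/4) := by
    calc |Real.exp (-((4*π*a^2)⁻¹) * m^2) - (1 + (-((4*π*a^2)⁻¹) * m^2))|
        ≤ |(-((4*π*a^2)⁻¹) * m^2)|^2 * (3/4) := by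
          convert hb using 2 <;> norm_num
      _ = (16*π^2*a^4)⁻¹ * m^4 * (3/4) := by rw [hid2]
  rw [hid]
  refine hb'.trans ?_
  have e2 : (m/a)^4/100 = (1/100) * (a^4)⁻¹ * m^4 := by
    rw [div_pow]; ring
  have e1 : (16*π^2*a^4)⁻¹ * m^4 * (3/4) = ((3/4) * (16*π^2*a^4)⁻¹) * m^4 := by ring
  rw [e1, e2]
  apply mul_le_mul_of_nonneg_right ?_ (by positivity : (0:ℝ) ≤ m^4)
  have hmono : (16*π^2*a^4)⁻¹ ≤ (144*a^4)⁻¹ := by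
    apply inv_anti₀ (by positivity)
    nlinarith [mul_le_mul_of_nonneg_right h9 ha4.le]
  calc (3/4) * (16*π^2*a^4)⁻¹ ≤ (3/4) * (144*a^4)⁻¹ :=
        mul_le_mul_of_nonneg_left hmono (by norm_num)
    _ ≤ (1/100) * (a^4)⁻¹ := by
        rw [show ((144:ℝ)*a^4)⁻¹ = (144:ℝ)⁻¹*(a^4)⁻¹ from by rw [mul_inv]]
        rw [← mul_assoc]
        apply mul_le_mul_of_nonneg_right ?_ (by positivity : (0:ℝ) ≤ (a^4)⁻¹)
        norm_num


/-- Rule of Thumb 2: with `a(m) = C(m)P(m)` and `b(m) = C(m)P(m)(C(m)+P(m))/2` one has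
`a(0) = a²`, `b(0) = a³`, and the expansions
`a(m)/a(0) = 1 − ((π−2)/(4π))(m/a)² + O(m⁴)`,
`b(m)/b(0) = 1 − ((π−3)/(4π))(m/a)² + O(m⁴)` as `m → 0`. -/
theorem bachelier_rule_of_thumb_two (a : ℝ) (ha : 0 < a) :
    bachelierCall a 0 * bachelierPut a 0 = a ^ 2
      ∧ bachelierCall a 0 * bachelierPut a 0 * ((bachelierCall a 0 + bachelierPut a 0) / 2)
          = a ^ 3
      ∧ ∃ δ > (0 : ℝ), ∃ M : ℝ, 0 ≤ M ∧ ∀ m : ℝ, |m| ≤ δ →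
          |bachelierCall a m * bachelierPut a m / a ^ 2
              - (1 - (Real.pi - 2) / (4 * Real.pi) * (m / a) ^ 2)| ≤ M * m ^ 4
            ∧ |bachelierCall a m * bachelierPut a m
                  * ((bachelierCall a m + bachelierPut a m) / 2) / a ^ 3
                - (1 - (Real.pi - 3) / (4 * Real.pi) * (m / a) ^ 2)| ≤ M * m ^ 4 := by
  have hπ : (3:ℝ) < π := pi_gt_three
  have hπ0 : (0:ℝ) < π := by linarith
  have hC0 : bachelierCall a 0 = a := by
    rw [call_formula a ha 0]; simp
  have hP0 : bachelierPut a 0 = a := by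
    unfold bachelierPut; rw [neg_zero, hC0]
  refine ⟨by rw [hC0, hP0]; ring, by rw [hC0, hP0]; ring, a, ha, 11/a^4, by positivity, ?_⟩
  intro m hm
  have ha4 : (0:ℝ) < a^4 := by positivity
  have hu : |m/a| ≤ 1 := by
    rw [abs_div, abs_of_pos ha, div_le_one ha]; exact hm
  have hgb := exp_approx a ha m hm
  have h1 := E_bound' a ha m
  have h2' := E_bound' a ha (-m)
  rw [show ((-m)/a)/(2*π) = -((m/a)/(2*π)) from by ring, sub_neg_eq_add,
    show ((-m)/a) = -(m/a) from by ring, abs_neg] at h2'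
  obtain ⟨G1, G2⟩ := core_bound (m/a) (Real.exp (-((4*π*a^2)⁻¹) * m^2))
    (∫ x in (0:ℝ)..m, bachelierPsi a x) (∫ x in (0:ℝ)..(-m), bachelierPsi a x)
    hu hgb h1 h2'
  have hCf : bachelierCall a m = a * Real.exp (-((4*π*a^2)⁻¹) * m^2)
      - m * (1/2 - ∫ x in (0:ℝ)..m, bachelierPsi a x) := call_formula a ha m
  have hPf : bachelierPut a m = a * Real.exp (-((4*π*a^2)⁻¹) * m^2)
      + m * (1/2 - ∫ x in (0:ℝ)..(-m), bachelierPsi a x) := by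
    unfold bachelierPut
    rw [call_formula a ha (-m),
      show -((4*π*a^2)⁻¹) * (-m)^2 = -((4*π*a^2)⁻¹) * m^2 from by ring]
    ring
  constructor
  · have key : bachelierCall a m * bachelierPut a m / a^2
        = (Real.exp (-((4*π*a^2)⁻¹) * m^2) - (m/a)*(1/2 - ∫ x in (0:ℝ)..m, bachelierPsi a x))
          * (Real.exp (-((4*π*a^2)⁻¹) * m^2)
            + (m/a)*(1/2 - ∫ x in (0:ℝ)..(-m), bachelierPsi a x)) := by
      rw [hCf, hPf]
      field_simp
    rw [key]
    refine G1.trans ?_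
    have e : 11/a^4*m^4 = 3*(m^4/a^4) + 8*(m^4/a^4) := by ring
    rw [div_pow, e]
    have hnn : (0:ℝ) ≤ m^4/a^4 := by positivity
    linarith
  · have key : bachelierCall a m * bachelierPut a m
          * ((bachelierCall a m + bachelierPut a m) / 2) / a^3
        = (Real.exp (-((4*π*a^2)⁻¹) * m^2) - (m/a)*(1/2 - ∫ x in (0:ℝ)..m, bachelierPsi a x))
          * (Real.exp (-((4*π*a^2)⁻¹) * m^2)
            + (m/a)*(1/2 - ∫ x in (0:ℝ)..(-m), bachelierPsi a x))
          * (((Real.exp (-((4*π*a^2)⁻¹) * m^2)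
              - (m/a)*(1/2 - ∫ x in (0:ℝ)..m, bachelierPsi a x))
            + (Real.exp (-((4*π*a^2)⁻¹) * m^2)
              + (m/a)*(1/2 - ∫ x in (0:ℝ)..(-m), bachelierPsi a x)))/2) := by
      rw [hCf, hPf]
      field_simp
    rw [key]
    refine G2.trans_eq ?_
    rw [div_pow]
    ring
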